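/- arXiv:1412.7260 — 4 statements merged into one kernel-verified Lean document; each statement's English description precedes it below -/
import Mathlib

section
/- Let r, μ, ε, γ, δ > 0 with μ + ε < r, and define β = (1 + 3r/(r − (μ+ε))) · (γ/2) + δ. Then for any t ≥ (β − γ/2)ε one has t/r < (t − (3γ/2)ε)/(μ + ε). -/
open scoped BigOperators

/-- Euclidean (ℓ2) norm of a vector. -/
noncomputable def l2 {n : ℕ} (v : Fin n → ℝ) : ℝ := Real.sqrt (∑ i, (v i) ^ 2)

/-- ℓ1 norm of a vector. -/
noncomputable def l1 {n : ℕ} (v : Fin n → ℝ) : ℝ := ∑ i, |v i|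

/-- Matrix-vector product, where the matrix is given by its columns. -/
noncomputable def mv {n N : ℕ} (A : Fin N → Fin n → ℝ) (c : Fin N → ℝ) : Fin n → ℝ :=
  ∑ j, c j • A j

/-- Euclidean inner product. -/
noncomputable def dot {n : ℕ} (v w : Fin n → ℝ) : ℝ := ∑ i, v i * w i

/-- Symmetrized convex hull of the columns of `X`. -/
def symmHull {n N : ℕ} (X : Fin N → Fin n → ℝ) : Set (Fin n → ℝ) :=
  convexHull ℝ (Set.range X ∪ Set.range (fun j => -X j))

/-- the key scalar inequality of Step 3. -/
theorem stmt_4 (r μ ε γ δ : ℝ) (hr : 0 < r) (hμ : 0 < μ) (hε : 0 < ε)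
    (hγ : 0 < γ) (hδ : 0 < δ) (hsep : μ + ε < r)
    (β : ℝ) (hβ : β = (1 + 3 * r / (r - (μ + ε))) * (γ / 2) + δ)
    (t : ℝ) (ht : (β - γ / 2) * ε ≤ t) :
    t / r < (t - (3 * γ / 2) * ε) / (μ + ε) := by
  have hd : 0 < r - (μ + ε) := by linarith
  rw [div_lt_div_iff₀ hr (by linarith)]
  have hk : (β - γ/2) * ε * (r - (μ + ε)) = (3*r*(γ/2) + δ*(r-(μ+ε))) * ε := by
    rw [hβ]; field_simp; ring
  nlinarith [mul_le_mul_of_nonneg_right ht hd.le, mul_pos (mul_pos hδ hd) hε]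
end

section
/- Deterministic null-space property: Let S be a subspace of R^n spanned by unit vectors x_1,...,x_{N_i} (columns of X_i) with inradius r > 0, and suppose μ + ε < r where μ + ε bounds |uᵀ y| for every unit vector u ∈ S and every column y of Y_{-i}. Fix γ > 0 and set β = (1 + 3r/(r − (μ+ε)))(γ/2) + δ with δ > 0. Let ỹ = x̃ + z̃ with x̃ ∈ S, ‖z̃‖₂ ≤ (γ/2)ε, and ‖ỹ‖₂ > βε. Then the minimum of ‖a‖₁ subject to ‖ỹ − X_i a‖₂ ≤ (γ/2)ε is strictly less than the minimum of ‖a‖₁ subject to ‖ỹ − Y_{-i} a‖₂ ≤ γε (the latter minimum taken to be +∞ if infeasible). -/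
open scoped BigOperators

namespace Stmt5Aux

noncomputable def toE {n : ℕ} (v : Fin n → ℝ) : EuclideanSpace ℝ (Fin n) :=
  (WithLp.equiv 2 (Fin n → ℝ)).symm v

lemma toE_add {n : ℕ} (v w : Fin n → ℝ) : toE (v + w) = toE v + toE w := rfl
lemma toE_sub {n : ℕ} (v w : Fin n → ℝ) : toE (v - w) = toE v - toE w := rfl
lemma toE_smul {n : ℕ} (c : ℝ) (v : Fin n → ℝ) : toE (c • v) = c • toE v := rfl

lemma l2_eq {n : ℕ} (v : Fin n → ℝ) : l2 v = ‖toE v‖ := by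
  simp [l2, toE, EuclideanSpace.norm_eq, sq_abs]

lemma dot_eq {n : ℕ} (v w : Fin n → ℝ) : dot v w = inner ℝ (toE v) (toE w) := by
  simp [dot, toE, PiLp.inner_apply, RCLike.inner_apply, conj_trivial]
  exact Finset.sum_congr rfl fun i _ => mul_comm _ _

lemma l2_nonneg {n : ℕ} (v : Fin n → ℝ) : 0 ≤ l2 v := by rw [l2_eq]; exact norm_nonneg _

lemma l2_smul {n : ℕ} (c : ℝ) (v : Fin n → ℝ) : l2 (c • v) = |c| * l2 v := by
  rw [l2_eq, l2_eq, toE_smul, norm_smul, Real.norm_eq_abs]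

lemma l2_eq_zero {n : ℕ} (v : Fin n → ℝ) (h : l2 v = 0) : v = 0 := by
  rw [l2_eq] at h
  have : toE v = 0 := norm_eq_zero.mp h
  simpa [toE] using this

lemma l2_sub_le {n : ℕ} (v w : Fin n → ℝ) : l2 v - l2 w ≤ l2 (v - w) := by
  rw [l2_eq, l2_eq, l2_eq, toE_sub]
  exact norm_sub_norm_le _ _

lemma abs_dot_le {n : ℕ} (v w : Fin n → ℝ) : |dot v w| ≤ l2 v * l2 w := by
  rw [dot_eq, l2_eq, l2_eq]; exact abs_real_inner_le_norm _ _

lemma dot_self {n : ℕ} (v : Fin n → ℝ) : dot v v = l2 v * l2 v := by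
  rw [dot_eq, l2_eq]; exact real_inner_self_eq_norm_mul_norm _

lemma dot_add_right {n : ℕ} (u v w : Fin n → ℝ) : dot u (v + w) = dot u v + dot u w := by
  simp [dot_eq, toE_add, inner_add_right]

lemma dot_mv {n N : ℕ} (u : Fin n → ℝ) (A : Fin N → Fin n → ℝ) (a : Fin N → ℝ) :
    dot u (mv A a) = ∑ j, a j * dot u (A j) := by
  simp only [dot, mv, Finset.sum_apply, Pi.smul_apply, smul_eq_mul, Finset.mul_sum]
  rw [Finset.sum_comm]
  exact Finset.sum_congr rfl fun j _ => Finset.sum_congr rfl fun i _ => by ring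

/-- From membership in the symmetrized convex hull, extract a representation with ℓ1 cost ≤ 1. -/
lemma rep_of_mem_symmHull {n N : ℕ} {X : Fin N → Fin n → ℝ} {v : Fin n → ℝ}
    (hv : v ∈ symmHull X) : ∃ b : Fin N → ℝ, mv X b = v ∧ l1 b ≤ 1 := by
  rw [symmHull, mem_convexHull_iff_exists_fintype] at hv
  obtain ⟨ι, _, w, z, hw0, hw1, hz, hx⟩ := hv
  have hsz : ∀ i, ∃ (c : ℝ) (j : Fin N), |c| = 1 ∧ z i = c • X j := by
    intro i
    rcases hz i with h | h
    · obtain ⟨j, hj⟩ := h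
      exact ⟨1, j, by norm_num, by simp [← hj]⟩
    · obtain ⟨j, hj⟩ := h
      exact ⟨-1, j, by norm_num, by simp [← hj]⟩
  choose e ji he hzi using hsz
  refine ⟨fun j => ∑ i, if ji i = j then w i * e i else 0, ?_, ?_⟩
  · rw [← hx, mv]
    calc ∑ j, (∑ i, if ji i = j then w i * e i else 0) • X j
        = ∑ j, ∑ i, (if ji i = j then w i * e i else 0) • X j :=
          Finset.sum_congr rfl fun j _ => Finset.sum_smul
      _ = ∑ i, ∑ j, (if ji i = j then w i * e i else 0) • X j := Finset.sum_comm
      _ = ∑ i, w i • z i := by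
          refine Finset.sum_congr rfl fun i _ => ?_
          simp only [ite_smul, zero_smul, Finset.sum_ite_eq, Finset.mem_univ, if_true]
          rw [hzi i, smul_smul]
  · rw [l1]
    calc ∑ j, |∑ i, if ji i = j then w i * e i else 0|
        ≤ ∑ j, ∑ i, |if ji i = j then w i * e i else 0| :=
          Finset.sum_le_sum fun j _ => Finset.abs_sum_le_sum_abs _ _
      _ = ∑ i, ∑ j, if ji i = j then |w i * e i| else 0 := by
          rw [Finset.sum_comm]
          exact Finset.sum_congr rfl fun i _ => Finset.sum_congr rfl fun j _ => by
            split <;> simp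
      _ = ∑ i, |w i * e i| := by
          refine Finset.sum_congr rfl fun i _ => ?_
          rw [Finset.sum_ite_eq, if_pos (Finset.mem_univ _)]
      _ = ∑ i, w i := Finset.sum_congr rfl fun i _ => by
          rw [abs_mul, he i, mul_one, abs_of_nonneg (hw0 i)]
      _ = 1 := hw1

end Stmt5Aux

open Stmt5Aux in
/-- deterministic noisy multi-subspace null-space property. -/
theorem stmt_5 {n Ni M : ℕ} (S : Submodule ℝ (Fin n → ℝ))
    (Xi : Fin Ni → Fin n → ℝ) (Ymi : Fin M → Fin n → ℝ)
    (hXS : ∀ j, Xi j ∈ S) (hXunit : ∀ j, l2 (Xi j) = 1)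
    (hspan : Submodule.span ℝ (Set.range Xi) = S)
    (r μ ε γ δ : ℝ) (hr : 0 < r) (hμ : 0 ≤ μ) (hε : 0 < ε) (hγ : 0 < γ) (hδ : 0 < δ)
    (hball : ∀ v ∈ S, l2 v ≤ r → v ∈ symmHull Xi)
    (hsep : μ + ε < r)
    (hinc : ∀ u ∈ S, l2 u = 1 → ∀ m, |dot u (Ymi m)| ≤ μ + ε)
    (β : ℝ) (hβ : β = (1 + 3 * r / (r - (μ + ε))) * (γ / 2) + δ)
    (yt xt zt : Fin n → ℝ) (hyt : yt = xt + zt) (hxt : xt ∈ S)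
    (hzt : l2 zt ≤ (γ / 2) * ε) (hbig : β * ε < l2 yt) :
    sInf ((fun a : Fin Ni → ℝ => (l1 a : EReal)) ''
        {a | l2 (yt - mv Xi a) ≤ (γ / 2) * ε}) <
      sInf ((fun a : Fin M → ℝ => (l1 a : EReal)) ''
        {a | l2 (yt - mv Ymi a) ≤ γ * ε}) := by
  set t := l2 xt with ht
  have hme : 0 < μ + ε := by linarith
  have hrme : 0 < r - (μ + ε) := by linarith
  -- lower bound on t = l2 xt
  have hzy : xt = yt - zt := by rw [hyt]; abel
  have htlow : 3 * r / (r - (μ + ε)) * (γ / 2) * ε + δ * ε < t := by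
    have h1 : l2 yt - l2 zt ≤ t := by rw [ht, hzy]; exact l2_sub_le _ _
    have : β * ε - (γ / 2) * ε ≤ t := by linarith
    rw [hβ] at this
    nlinarith
  have htpos : 0 < t := by
    have h3 : 0 ≤ 3 * r / (r - (μ + ε)) * (γ / 2) * ε := by positivity
    nlinarith
  -- representation of xt with small l1 norm
  have hrep : ∃ a : Fin Ni → ℝ, mv Xi a = xt ∧ l1 a ≤ t / r := by
    have hmem : (r / t) • xt ∈ symmHull Xi := by
      refine hball _ (S.smul_mem _ hxt) ?_
      rw [l2_smul, ← ht, abs_of_nonneg (by positivity)]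
      rw [div_mul_cancel₀ _ (ne_of_gt htpos)]
    obtain ⟨b, hb1, hb2⟩ := rep_of_mem_symmHull hmem
    refine ⟨(t / r) • b, ?_, ?_⟩
    · have : mv Xi ((t / r) • b) = (t / r) • mv Xi b := by
        simp [mv, Finset.smul_sum, smul_smul, Pi.smul_apply, smul_eq_mul]
      rw [this, hb1, smul_smul, div_mul_div_cancel₀, div_self (ne_of_gt htpos), one_smul]
      exact ne_of_gt hr
    · have : l1 ((t / r) • b) = (t / r) * l1 b := by
        simp [l1, Finset.mul_sum, abs_mul, abs_of_nonneg (le_of_lt (div_pos htpos hr))]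
      rw [this]
      calc (t / r) * l1 b ≤ (t / r) * 1 :=
            mul_le_mul_of_nonneg_left hb2 (le_of_lt (div_pos htpos hr))
        _ = t / r := mul_one _
  obtain ⟨a0, ha0, ha0l1⟩ := hrep
  -- a0 is feasible for the left problem
  have hfeas : a0 ∈ {a : Fin Ni → ℝ | l2 (yt - mv Xi a) ≤ (γ / 2) * ε} := by
    have : yt - mv Xi a0 = zt := by rw [ha0, hyt]; abel
    simpa [this] using hzt
  -- the dual certificate
  set u := (t⁻¹) • xt with hu
  have huS : u ∈ S := S.smul_mem _ hxt
  have hunorm : l2 u = 1 := by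
    rw [hu, l2_smul, ← ht, abs_of_nonneg (by positivity), inv_mul_cancel₀ (ne_of_gt htpos)]
  have hdotxt : dot u xt = t := by
    rw [hu]
    have : dot (t⁻¹ • xt) xt = t⁻¹ * dot xt xt := by
      simp only [dot]
      rw [Finset.mul_sum]
      exact Finset.sum_congr rfl fun i _ => by simp [mul_assoc]
    rw [this, dot_self, ← ht, ← mul_assoc, inv_mul_cancel₀ (ne_of_gt htpos), one_mul]
  have hdotyt : t - (γ / 2) * ε ≤ dot u yt := by
    have h1 : dot u yt = dot u xt + dot u zt := by rw [hyt, dot_add_right]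
    have h2 : |dot u zt| ≤ l2 u * l2 zt := abs_dot_le _ _
    rw [hunorm, one_mul] at h2
    have h3 : -((γ / 2) * ε) ≤ dot u zt := by
      have := neg_abs_le (dot u zt); linarith
    rw [h1, hdotxt]; linarith
  -- lower bound for any feasible point of the right problem
  set L := (t - 3 * (γ / 2) * ε) / (μ + ε) with hL
  have hlower : ∀ a : Fin M → ℝ, l2 (yt - mv Ymi a) ≤ γ * ε → L ≤ l1 a := by
    intro a ha
    have h1 : dot u (mv Ymi a) = ∑ m, a m * dot u (Ymi m) := dot_mv _ _ _
    have h2 : |dot u (mv Ymi a)| ≤ (μ + ε) * l1 a := by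
      rw [h1, l1, Finset.mul_sum]
      calc |∑ m, a m * dot u (Ymi m)| ≤ ∑ m, |a m * dot u (Ymi m)| :=
            Finset.abs_sum_le_sum_abs _ _
        _ ≤ ∑ m, (μ + ε) * |a m| := Finset.sum_le_sum fun m _ => by
            rw [abs_mul]
            calc |a m| * |dot u (Ymi m)| ≤ |a m| * (μ + ε) :=
                  mul_le_mul_of_nonneg_left (hinc u huS hunorm m) (abs_nonneg _)
              _ = (μ + ε) * |a m| := mul_comm _ _
    have h3 : |dot u (yt - mv Ymi a)| ≤ γ * ε := by
      have := abs_dot_le u (yt - mv Ymi a)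
      rw [hunorm, one_mul] at this
      linarith
    have h4 : dot u yt = dot u (yt - mv Ymi a) + dot u (mv Ymi a) := by
      have : yt = (yt - mv Ymi a) + mv Ymi a := by abel
      conv_lhs => rw [this]
      exact dot_add_right _ _ _
    have h5 : dot u (yt - mv Ymi a) ≤ γ * ε := le_trans (le_abs_self _) h3
    have h6 : dot u (mv Ymi a) ≤ (μ + ε) * l1 a := le_trans (le_abs_self _) h2
    have : t - (γ / 2) * ε ≤ γ * ε + (μ + ε) * l1 a := by
      rw [h4] at hdotyt; linarith
    rw [hL, div_le_iff₀ hme]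
    linarith [mul_comm (μ + ε) (l1 a)]
  -- the strict inequality between the two bounds
  have hkey : t / r < L := by
    rw [hL, div_lt_div_iff₀ hr hme]
    have hd : 3 * r / (r - (μ + ε)) * (γ / 2) * ε * (r - (μ + ε)) = 3 * r * (γ / 2) * ε := by
      field_simp
    nlinarith [hd, mul_pos (show (0:ℝ) < t - 3 * r / (r - (μ + ε)) * (γ / 2) * ε by
      nlinarith [mul_pos hδ hε]) hrme]
  -- put it together in EReal
  have hleft : sInf ((fun a : Fin Ni → ℝ => (l1 a : EReal)) ''
      {a | l2 (yt - mv Xi a) ≤ (γ / 2) * ε}) ≤ ((t / r : ℝ) : EReal) := by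
    refine le_trans (sInf_le ⟨a0, hfeas, rfl⟩) ?_
    show ((l1 a0 : ℝ) : EReal) ≤ ((t / r : ℝ) : EReal)
    exact_mod_cast ha0l1
  have hright : ((L : ℝ) : EReal) ≤ sInf ((fun a : Fin M → ℝ => (l1 a : EReal)) ''
      {a | l2 (yt - mv Ymi a) ≤ γ * ε}) := by
    refine le_sInf ?_
    rintro x ⟨a, ha, rfl⟩
    show ((L : ℝ) : EReal) ≤ ((l1 a : ℝ) : EReal)
    exact_mod_cast hlower a ha
  refine lt_of_le_of_lt hleft (lt_of_lt_of_le ?_ hright)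
  exact_mod_cast hkey
end

section
/- Upper bound step: Let S be a subspace of R^n spanned by unit vectors x_1,...,x_N (columns of X) with inradius r > 0. Let ỹ = x̃ + z̃ with x̃ ∈ S and ‖z̃‖₂ ≤ η. Then there exists a ∈ R^N with ‖ỹ − X a‖₂ ≤ η and ‖a‖₁ ≤ ‖x̃‖₂ / r. -/
open scoped BigOperators

lemma l2_nonneg {n : ℕ} (v : Fin n → ℝ) : 0 ≤ l2 v := Real.sqrt_nonneg _

lemma l2_smul {n : ℕ} (t : ℝ) (v : Fin n → ℝ) : l2 (t • v) = |t| * l2 v := by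
  unfold l2
  have h : ∑ i, ((t • v) i) ^ 2 = t ^ 2 * ∑ i, (v i) ^ 2 := by
    simp [Finset.mul_sum, mul_pow]
  rw [h, Real.sqrt_mul (sq_nonneg t), Real.sqrt_sq_eq_abs]

lemma l2_eq_zero {n : ℕ} {v : Fin n → ℝ} (h : l2 v = 0) : v = 0 := by
  have hsum : ∑ i, (v i) ^ 2 = 0 :=
    le_antisymm (Real.sqrt_eq_zero'.mp h) (Finset.sum_nonneg fun i _ => sq_nonneg _)
  funext i
  have := (Finset.sum_eq_zero_iff_of_nonneg (fun i _ => sq_nonneg (v i))).mp hsum i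
    (Finset.mem_univ i)
  exact pow_eq_zero_iff (by norm_num) |>.mp this

/-- upper bound step — a feasible point of small ℓ1 norm. -/
theorem stmt_6 {n N : ℕ} (S : Submodule ℝ (Fin n → ℝ)) (X : Fin N → Fin n → ℝ)
    (hXS : ∀ j, X j ∈ S) (hXunit : ∀ j, l2 (X j) = 1)
    (hspan : Submodule.span ℝ (Set.range X) = S)
    (r : ℝ) (hr : 0 < r)
    (hball : ∀ v ∈ S, l2 v ≤ r → v ∈ symmHull X)
    (η : ℝ) (hη : 0 < η)
    (yt xt zt : Fin n → ℝ) (hyt : yt = xt + zt) (hxt : xt ∈ S) (hzt : l2 zt ≤ η) :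
    ∃ a : Fin N → ℝ, l2 (yt - mv X a) ≤ η ∧ l1 a ≤ l2 xt / r := by
  classical
  by_cases hx0 : l2 xt = 0
  · refine ⟨0, ?_, ?_⟩
    · have hxt0 : xt = 0 := l2_eq_zero hx0
      have : yt - mv X 0 = zt := by
        simp [mv, hyt, hxt0]
      rw [this]; exact hzt
    · simp [l1, hx0]
  · set c := l2 xt with hc_def
    have hc : 0 < c := lt_of_le_of_ne (l2_nonneg xt) (Ne.symm hx0)
    set v : Fin n → ℝ := (r / c) • xt with hv_def
    have hl2v : l2 v = r := by
      rw [hv_def, l2_smul, abs_of_pos (div_pos hr hc), ← hc_def]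
      field_simp
    have hvH : v ∈ symmHull X := hball v (S.smul_mem _ hxt) (le_of_eq hl2v)
    rw [symmHull, mem_convexHull_iff_exists_fintype] at hvH
    obtain ⟨ι, _, w, z, hw0, hw1, hzmem, hsum⟩ := hvH
    have hrep : ∀ i, ∃ j : Fin N, ∃ s : ℝ, |s| = 1 ∧ z i = s • X j := by
      intro i
      rcases hzmem i with ⟨j, hj⟩ | ⟨j, hj⟩
      · exact ⟨j, 1, by norm_num, by simp [← hj]⟩
      · refine ⟨j, -1, by norm_num, ?_⟩
        simp only at hj
        rw [← hj]; simp
    choose jf sf hsabs hzeq using hrep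
    set a : Fin N → ℝ := fun k => (c / r) * ∑ i, (if jf i = k then sf i * w i else 0)
      with ha_def
    have key : ∑ k, (∑ i, (if jf i = k then sf i * w i else 0)) • X k
        = ∑ i, w i • z i := by
      have h1 : ∀ k, (∑ i, (if jf i = k then sf i * w i else 0)) • X k
          = ∑ i, (if jf i = k then (sf i * w i) • X k else 0) := by
        intro k
        rw [Finset.sum_smul]
        congr 1; funext i
        by_cases h : jf i = k <;> simp [h]
      calc ∑ k, (∑ i, (if jf i = k then sf i * w i else 0)) • X k
          = ∑ k, ∑ i, (if jf i = k then (sf i * w i) • X k else 0) := by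
            exact Finset.sum_congr rfl fun k _ => h1 k
        _ = ∑ i, ∑ k, (if jf i = k then (sf i * w i) • X k else 0) := Finset.sum_comm
        _ = ∑ i, (sf i * w i) • X (jf i) := by
            refine Finset.sum_congr rfl fun i _ => ?_
            simp
        _ = ∑ i, w i • z i := by
            refine Finset.sum_congr rfl fun i _ => ?_
            rw [hzeq i, smul_smul, mul_comm]
    have hmv : mv X a = xt := by
      unfold mv
      have h2 : ∀ k, a k • X k
          = (c / r) • ((∑ i, (if jf i = k then sf i * w i else 0)) • X k) := by
        intro k; rw [ha_def]; simp [mul_smul]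
      rw [Finset.sum_congr rfl fun k _ => h2 k, ← Finset.smul_sum, key, hsum, hv_def,
        smul_smul]
      have : c / r * (r / c) = 1 := by field_simp
      rw [this, one_smul]
    refine ⟨a, ?_, ?_⟩
    · have : yt - mv X a = zt := by rw [hmv, hyt]; abel
      rw [this]; exact hzt
    · have hbound : l1 a ≤ c / r := by
        unfold l1
        have h3 : ∀ k, |a k| ≤ (c / r) * ∑ i, (if jf i = k then w i else 0) := by
          intro k
          rw [ha_def]
          simp only
          rw [abs_mul, abs_of_pos (div_pos hc hr)]
          refine mul_le_mul_of_nonneg_left ?_ (le_of_lt (div_pos hc hr))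
          refine (Finset.abs_sum_le_sum_abs _ _).trans (le_of_eq ?_)
          refine Finset.sum_congr rfl fun i _ => ?_
          by_cases h : jf i = k
          · simp [h, abs_mul, hsabs i, abs_of_nonneg (hw0 i)]
          · simp [h]
        calc ∑ k, |a k| ≤ ∑ k, (c / r) * ∑ i, (if jf i = k then w i else 0) :=
              Finset.sum_le_sum fun k _ => h3 k
          _ = (c / r) * ∑ k, ∑ i, (if jf i = k then w i else 0) := by
              rw [Finset.mul_sum]
          _ = (c / r) * ∑ i, ∑ k, (if jf i = k then w i else 0) := by
              rw [Finset.sum_comm]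
          _ = (c / r) * ∑ i, w i := by
              congr 1
              exact Finset.sum_congr rfl fun i _ => by simp
          _ = c / r := by rw [hw1, mul_one]
      exact hbound
end

section
/- Approximate support recovery, Step 3: Let c* = (c_i*, c_{-i}*) be optimal for min ‖c‖₁ s.t. ‖y − Y_i c_i − Y_{-i} c_{-i}‖₂ ≤ γε, and set ỹ = y − Y_i c_i*. Then ‖c_{-i}*‖₁ ≤ min{‖b‖₁ : ‖ỹ − Y_i b‖₂ ≤ γε}, provided this latter problem is feasible. -/
open scoped BigOperators

/-- approximate support recovery, Step 3. -/
theorem stmt_9 {n Ni M : ℕ} (Yi : Fin Ni → Fin n → ℝ) (Ymi : Fin M → Fin n → ℝ)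
    (y : Fin n → ℝ) (ε γ : ℝ)
    (ci : Fin Ni → ℝ) (cmi : Fin M → ℝ)
    (hfeas : l2 (y - mv Yi ci - mv Ymi cmi) ≤ γ * ε)
    (hopt : ∀ (di : Fin Ni → ℝ) (dmi : Fin M → ℝ),
      l2 (y - mv Yi di - mv Ymi dmi) ≤ γ * ε → l1 ci + l1 cmi ≤ l1 di + l1 dmi) :
    ∀ b : Fin Ni → ℝ, l2 ((y - mv Yi ci) - mv Yi b) ≤ γ * ε → l1 cmi ≤ l1 b := by
  intro b hb
  have hmv : mv Yi (ci + b) = mv Yi ci + mv Yi b := by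
    simp [mv, add_smul, Finset.sum_add_distrib]
  have hmv0 : mv Ymi (0 : Fin M → ℝ) = 0 := by simp [mv]
  have h1 : l1 ci + l1 cmi ≤ l1 (ci + b) + l1 (0 : Fin M → ℝ) := by
    apply hopt
    have : y - mv Yi (ci + b) - mv Ymi 0 = (y - mv Yi ci) - mv Yi b := by
      rw [hmv, hmv0]; abel
    rw [this]; exact hb
  have h0 : l1 (0 : Fin M → ℝ) = 0 := by simp [l1]
  have htri : l1 (ci + b) ≤ l1 ci + l1 b := by
    simp only [l1, ← Finset.sum_add_distrib]
    exact Finset.sum_le_sum fun i _ => abs_add_le _ _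
  linarith
end
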